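/- arXiv:1810.06145 — 2 statements merged into one kernel-verified Lean document; each statement's English description precedes it below -/
import Mathlib

section
/- The ω-homology of a tensor product of standard complexes is one-dimensional: if C and C' are standard complexes of lengths 2m and 2n, then H_ω((C⊗C')/U) := ker(ω̂)/im(ω̂) ≅ F, generated by the class of T_{2m} ⊗ T_{2n}', where ω̂ is the map induced on (C⊗C')/U by ω = 1⊗ω + ω⊗1 + ω⊗ω. -/
open Polynomial

abbrev F2 : Type := ZMod 2
abbrev R : Type := Polynomial F2

noncomputable section

namespace AI

/-- The variable `U`. -/
def Uu : R := Polynomial.X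

/-- The free `R`-module of rank `n`. -/
abbrev V (n : ℕ) : Type := Fin n → R

/-- The `i`-th standard basis vector. -/
def e {n : ℕ} (i : Fin n) : V n := fun j => if j = i then 1 else 0

/-- The `i`-th standard basis vector over `F2`. -/
def e2 {n : ℕ} (i : Fin n) : Fin n → F2 := fun j => if j = i then 1 else 0

/-- `x` lies in the image of multiplication by `U`. -/
def modU {n : ℕ} (x : V n) : Prop := ∀ j, (x j).coeff 0 = 0

/-- `x` is homogeneous of degree `c` with respect to the generator gradings `gr`
(where `deg U = -2`). -/
def IsHomog {n : ℕ} (gr : Fin n → ℤ) (c : ℤ) (x : V n) : Prop :=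
  ∀ (j : Fin n) (m : ℕ), (x j).coeff m ≠ 0 → gr j - 2 * (m : ℤ) = c

/-- `f` is a graded `R`-linear map of degree `dg`. -/
def GradedMap {m n : ℕ} (gr₁ : Fin m → ℤ) (gr₂ : Fin n → ℤ) (dg : ℤ)
    (f : V m →ₗ[R] V n) : Prop :=
  ∀ i : Fin m, IsHomog gr₂ (gr₁ i + dg) (f (e i))

/-- The raw data of a free finitely generated `ℤ`-graded complex over `R = F[U]`. -/
structure PreCplx where
  n : ℕ
  gr : Fin n → ℤ
  d : V n →ₗ[R] V n

def IsCycle (C : PreCplx) (x : V C.n) : Prop := C.d x = 0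

def IsBdry (C : PreCplx) (x : V C.n) : Prop := ∃ y, C.d y = x

/-- `x` is a cycle representing a `U`-nontorsion homology class. -/
def NontorsionClass (C : PreCplx) (x : V C.n) : Prop :=
  IsCycle C x ∧ ∀ k : ℕ, ¬ IsBdry C ((Uu ^ k) • x)

/-- `U⁻¹H_*(C) ≅ F[U, U⁻¹]`, generated by a degree-zero cycle (normalization
convention: the maximal degree of a `U`-nontorsion cycle class is zero, so the
localized homology is supported in even degrees). -/
def HtowerCond (C : PreCplx) : Prop :=
  ∃ x : V C.n, IsCycle C x ∧ IsHomog C.gr 0 x ∧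
    (∀ k : ℕ, ¬ IsBdry C ((Uu ^ k) • x)) ∧
    (∀ y : V C.n, IsCycle C y →
      ∃ (k : ℕ) (p : R) (z : V C.n), (Uu ^ k) • y = p • x + C.d z)

/-- `C` is a genuine graded chain complex. -/
def IsCplx (C : PreCplx) : Prop :=
  GradedMap C.gr C.gr (-1) C.d ∧ C.d ∘ₗ C.d = 0

/-- `f` and `g` are homotopic mod `U`. -/
def HomotopicModU (C₁ C₂ : PreCplx) (f g : V C₁.n →ₗ[R] V C₂.n) : Prop :=
  ∃ H : V C₁.n →ₗ[R] V C₂.n, GradedMap C₁.gr C₂.gr 1 H ∧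
    ∀ x, modU ((f + g + H ∘ₗ C₁.d + C₂.d ∘ₗ H) x)

/-- The raw data of an almost ι-complex. -/
structure PreAI extends PreCplx where
  ι : V n →ₗ[R] V n

/-- `ω = 1 + ι`. -/
def omega (C : PreAI) : V C.n →ₗ[R] V C.n := LinearMap.id + C.ι

/-- `C` is an almost ι-complex. -/
def IsAICplx (C : PreAI) : Prop :=
  IsCplx C.toPreCplx ∧
  GradedMap C.gr C.gr 0 C.ι ∧
  (∀ x, modU ((C.ι ∘ₗ C.d + C.d ∘ₗ C.ι) x)) ∧
  HomotopicModU C.toPreCplx C.toPreCplx (C.ι ∘ₗ C.ι) LinearMap.id ∧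
  HtowerCond C.toPreCplx

/-- `C` is a genuine ι-complex: `ι` is an honest chain map whose square is
genuinely chain homotopic to the identity. -/
def IsIotaCplx (C : PreAI) : Prop :=
  IsCplx C.toPreCplx ∧
  GradedMap C.gr C.gr 0 C.ι ∧
  C.ι ∘ₗ C.d = C.d ∘ₗ C.ι ∧
  (∃ H : V C.n →ₗ[R] V C.n, GradedMap C.gr C.gr 1 H ∧
    C.ι ∘ₗ C.ι + LinearMap.id = H ∘ₗ C.d + C.d ∘ₗ H) ∧
  HtowerCond C.toPreCplx

/-- A reduced complex: the differential vanishes mod `U`. -/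
def Reduced (C : PreAI) : Prop := ∀ x, modU (C.d x)

/-- `f` is an almost ι-morphism. -/
def isAIMorphism (C₁ C₂ : PreAI) (f : V C₁.n →ₗ[R] V C₂.n) : Prop :=
  GradedMap C₁.gr C₂.gr 0 f ∧
  f ∘ₗ C₁.d = C₂.d ∘ₗ f ∧
  HomotopicModU C₁.toPreCplx C₂.toPreCplx (f ∘ₗ C₁.ι) (C₂.ι ∘ₗ f)

/-- A local map: an almost ι-morphism inducing an isomorphism on `U`-localized
homology (equivalently, with the normalization conventions in force, preserving
`U`-nontorsion cycle classes). -/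
def isLocalMap (C₁ C₂ : PreAI) (f : V C₁.n →ₗ[R] V C₂.n) : Prop :=
  isAIMorphism C₁ C₂ f ∧
  ∀ x, NontorsionClass C₁.toPreCplx x → NontorsionClass C₂.toPreCplx (f x)

/-- Local equivalence of almost ι-complexes. -/
def LocallyEquiv (C₁ C₂ : PreAI) : Prop :=
  (∃ f, isLocalMap C₁ C₂ f) ∧ (∃ g, isLocalMap C₂ C₁ g)

/-- The tensor product (over `R`) of linear maps between free modules,
in the bases indexed by `finProdFinEquiv`. -/
def tmap {m n m' n' : ℕ} (f : V m →ₗ[R] V m') (g : V n →ₗ[R] V n') :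
    V (m * n) →ₗ[R] V (m' * n') where
  toFun x := fun p => ∑ q : Fin (m * n),
    x q * f (e (finProdFinEquiv.symm q).1) (finProdFinEquiv.symm p).1
        * g (e (finProdFinEquiv.symm q).2) (finProdFinEquiv.symm p).2
  map_add' x y := by
    funext p
    simp [Pi.add_apply, add_mul, Finset.sum_add_distrib]
  map_smul' c x := by
    funext p
    simp only [RingHom.id_apply, Pi.smul_apply, smul_eq_mul, Finset.mul_sum]
    exact Finset.sum_congr rfl fun q _ => by ring

/-- The tensor product of complexes. -/
def tensorPre (C₁ C₂ : PreCplx) : PreCplx where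
  n := C₁.n * C₂.n
  gr := fun q => C₁.gr (finProdFinEquiv.symm q).1 + C₂.gr (finProdFinEquiv.symm q).2
  d := tmap C₁.d LinearMap.id + tmap LinearMap.id C₂.d

/-- The tensor product of almost ι-complexes. -/
def tensorAI (C₁ C₂ : PreAI) : PreAI where
  toPreCplx := tensorPre C₁.toPreCplx C₂.toPreCplx
  ι := tmap C₁.ι C₂.ι

/-- The transpose of a square matrix map (the dual map in the dual basis). -/
def tr {n : ℕ} (f : V n →ₗ[R] V n) : V n →ₗ[R] V n where
  toFun x := fun j => ∑ i : Fin n, x i * f (e j) i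
  map_add' x y := by
    funext j
    simp [Pi.add_apply, add_mul, Finset.sum_add_distrib]
  map_smul' c x := by
    funext j
    simp only [RingHom.id_apply, Pi.smul_apply, smul_eq_mul, Finset.mul_sum]
    exact Finset.sum_congr rfl fun i _ => by ring

/-- The dual complex. -/
def dualPre (C : PreCplx) : PreCplx where
  n := C.n
  gr := fun i => -C.gr i
  d := tr C.d

/-- The dual almost ι-complex. -/
def dualAI (C : PreAI) : PreAI where
  toPreCplx := dualPre C.toPreCplx
  ι := tr C.ι

/-- The trivial complex `C(0) = (F[U], ∂ = 0, ι = id)`. -/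
def cZero : PreAI := ⟨⟨1, fun _ => 0, 0⟩, LinearMap.id⟩

/-- The contraction map `C ⊗ C^∨ → F[U]`, `x ⊗ y ↦ y(x)`. -/
def contr (n : ℕ) : V (n * n) →ₗ[R] V 1 where
  toFun x := fun _ => ∑ i : Fin n, x (finProdFinEquiv (i, i))
  map_add' x y := by funext j; simp [Pi.add_apply, Finset.sum_add_distrib]
  map_smul' c x := by
    funext j
    simp only [RingHom.id_apply, Pi.smul_apply, smul_eq_mul, Finset.mul_sum]

/-! ### Standard and augmented complexes -/

/-- The `i`-th symbol (0-indexed) of the parameter sequence, padded by zeros. -/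
def seqAt (M : List ℤ) (i : ℕ) : ℤ := M.getD i 0

/-- Grading step of a `b`-arrow. -/
def bstep (b : ℤ) : ℤ := (if 0 < b then 1 else -1) - 2 * b

/-- Grading of the generator `T_i` of the standard/augmented complex. -/
def stdGr (M : List ℤ) (i : ℕ) : ℤ :=
  ∑ s ∈ Finset.range i, if s % 2 = 1 then bstep (seqAt M s) else 0

/-- A linear endomorphism of `V n` given by a matrix of coefficients. -/
def ofMatrix {n : ℕ} (c : ℕ → ℕ → R) : V n →ₗ[R] V n where
  toFun x := fun j => ∑ i : Fin n, x i * c i j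
  map_add' x y := by
    funext j
    simp [Pi.add_apply, add_mul, Finset.sum_add_distrib]
  map_smul' r x := by
    funext j
    simp only [RingHom.id_apply, Pi.smul_apply, smul_eq_mul, Finset.mul_sum]
    exact Finset.sum_congr rfl fun i _ => by ring

/-- Matrix of the differential of the standard/augmented complex: the `b`-symbol
at (0-indexed) odd position `s` of `M` relates `T_s` and `T_{s+1}`. -/
def dCoef (M : List ℤ) (i j : ℕ) : R :=
  if i % 2 = 1 ∧ seqAt M i < 0 ∧ j = i + 1 then Uu ^ (seqAt M i).natAbs
  else if i % 2 = 0 ∧ 0 < i ∧ 0 < seqAt M (i - 1) ∧ j + 1 = i then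
    Uu ^ (seqAt M (i - 1)).natAbs
  else 0

/-- Matrix of `ω = 1 + ι` on the standard/augmented complex: the `a`-symbol at
(0-indexed) even position `s` of `M` relates `T_s` and `T_{s+1}`. -/
def wCoef (M : List ℤ) (i j : ℕ) : R :=
  if i % 2 = 0 ∧ seqAt M i = -1 ∧ j = i + 1 then 1
  else if i % 2 = 1 ∧ seqAt M (i - 1) = 1 ∧ j + 1 = i then 1
  else 0

/-- Matrix of `ι = 1 + ω` (char 2). -/
def iCoef (M : List ℤ) (i j : ℕ) : R :=
  (if i = j then 1 else 0) + wCoef M i j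

/-- The standard (even length) or augmented (odd length) complex on generators
`T_0, …, T_{M.length}` determined by the symbol sequence `M`. -/
def symCplx (M : List ℤ) : PreAI :=
  ⟨⟨M.length + 1, fun i => stdGr M i, ofMatrix (dCoef M)⟩, ofMatrix (iCoef M)⟩

/-- Validity of a standard parameter sequence. -/
def StdParams (M : List ℤ) : Prop :=
  M.length % 2 = 0 ∧
  ∀ i < M.length, if i % 2 = 0 then seqAt M i = 1 ∨ seqAt M i = -1 else seqAt M i ≠ 0

/-- Validity of an augmented parameter sequence. -/
def AugParams (M : List ℤ) : Prop :=
  M.length % 2 = 1 ∧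
  ∀ i < M.length, if i % 2 = 0 then seqAt M i = 1 ∨ seqAt M i = -1 else seqAt M i ≠ 0

/-- The modified order `<!` on `ℤ`: `−1 <! −2 <! ⋯ <! 0 <! ⋯ <! 2 <! 1`. -/
def ltB (x y : ℤ) : Prop :=
  (x < 0 ∧ 0 ≤ y) ∨ (x ≤ 0 ∧ 0 < y) ∨ (x < 0 ∧ y < 0 ∧ y < x) ∨ (0 < x ∧ 0 < y ∧ y < x)

def leB (x y : ℤ) : Prop := ltB x y ∨ x = y

/-- Strict lexicographic order on (zero-padded) parameter sequences. -/
def lexLt (M M' : List ℤ) : Prop :=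
  ∃ k : ℕ, (∀ i < k, seqAt M i = seqAt M' i) ∧ ltB (seqAt M k) (seqAt M' k)

def lexLe (M M' : List ℤ) : Prop := lexLt M M' ∨ ∀ i, seqAt M i = seqAt M' i

/-- A short map from the standard (even `M.length`) or augmented (odd `M.length`)
complex determined by `M` to `A`: the `ω`-condition (standard case) resp. the
`∂`-condition (augmented case) is waived on the final generator. -/
def isShortMap (M : List ℤ) (A : PreAI) (f : V (M.length + 1) →ₗ[R] V A.n) : Prop :=
  GradedMap (symCplx M).gr A.gr 0 f ∧
  (∀ i : Fin (M.length + 1), ((i : ℕ) < M.length ∨ M.length % 2 = 0) →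
    A.d (f (e i)) = f ((symCplx M).d (e i))) ∧
  (∀ i : Fin (M.length + 1), ((i : ℕ) < M.length ∨ M.length % 2 = 1) →
    modU ((omega A) (f (e i)) + f ((omega (symCplx M)) (e i))))

/-- A local short map: `T_0` goes to a `U`-nontorsion cycle class. -/
def isLocalShortMap (M : List ℤ) (A : PreAI) (f : V (M.length + 1) →ₗ[R] V A.n) : Prop :=
  isShortMap M A f ∧ NontorsionClass A.toPreCplx (f (e ⟨0, Nat.succ_pos _⟩))

/-- The sequence of invariants `s_i(A)` (1-indexed in the paper; 0-indexed here):
`s k` is the `≤!`-maximum of the `(k+1)`-st symbols among standard complexes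
locally mapping to `A` whose first `k` symbols are `s 0, …, s (k-1)`. -/
def IsInvariantSeq (A : PreAI) (s : ℕ → ℤ) : Prop :=
  ∀ k : ℕ,
    (∃ M : List ℤ, StdParams M ∧ (∃ f, isLocalMap (symCplx M) A f) ∧
      ∀ i ≤ k, seqAt M i = s i) ∧
    (∀ M : List ℤ, StdParams M → (∃ f, isLocalMap (symCplx M) A f) →
      (∀ i < k, seqAt M i = s i) → leB (seqAt M k) (s k))

/-- Reduction mod `U` of a linear map, as an `F₂`-linear map. -/
def mapHat {m n : ℕ} (f : V m →ₗ[R] V n) : (Fin m → F2) →ₗ[F2] (Fin n → F2) where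
  toFun x := fun j => ∑ i : Fin m, x i * (f (e i) j).coeff 0
  map_add' x y := by
    funext j
    simp [Pi.add_apply, add_mul, Finset.sum_add_distrib]
  map_smul' c x := by
    funext j
    simp only [RingHom.id_apply, Pi.smul_apply, smul_eq_mul, Finset.mul_sum]
    exact Finset.sum_congr rfl fun i _ => by ring

/-- The induced action `ω̂` on `C/U`. -/
def wHat (C : PreAI) : (Fin C.n → F2) →ₗ[F2] (Fin C.n → F2) := mapHat (omega C)

end AI

namespace AI

open Matrix Kronecker

/-! ### Auxiliary development for the omega-homology computation -/

lemma F2_add_self (a : F2) : a + a = 0 := by revert a; decide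
lemma F2_mul_self (a : F2) : a * a = a := by revert a; decide
lemma F2_zero_or_one (a : F2) : a = 0 ∨ a = 1 := by revert a; decide

lemma Mat_add_self {k : ℕ} (A : Matrix (Fin k) (Fin k) F2) : A + A = 0 := by
  ext i j
  show A i j + A i j = 0
  exact F2_add_self _

/-- The mod-`U` matrix of `ω` on a standard complex, as a function on `ℕ`. -/
def wfun (M : List ℤ) (i j : ℕ) : F2 :=
  if i % 2 = 0 ∧ seqAt M i = -1 ∧ j = i + 1 then 1
  else if i % 2 = 1 ∧ seqAt M (i - 1) = 1 ∧ j + 1 = i then 1 else 0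

lemma seqAt_len (M : List ℤ) : seqAt M M.length = 0 := by
  unfold seqAt; exact List.getD_eq_default _ _ le_rfl

lemma seqAt_lt {M : List ℤ} {i : ℕ} (h : seqAt M i ≠ 0) : i < M.length := by
  by_contra hc
  exact h (List.getD_eq_default _ _ (le_of_not_gt hc))

lemma wfun_mul_wfun (M : List ℤ) (i k j : ℕ) : wfun M i k * wfun M k j = 0 := by
  unfold wfun
  split_ifs with c1 c2 c3 c4 c5 <;> try simp
  · omega
  · obtain ⟨_, ha, hk⟩ := c1
    obtain ⟨_, hb, _⟩ := c3
    have : k - 1 = i := by omega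
    rw [this] at hb; omega
  · obtain ⟨_, ha, hk⟩ := c4
    obtain ⟨_, hb, _⟩ := c5
    have : i - 1 = k := by omega
    rw [this] at ha; omega
  · omega

lemma wfun_row_disj (M : List ℤ) {i j : ℕ} (k : ℕ) (h : i ≠ j) :
    wfun M i k * wfun M j k = 0 := by
  unfold wfun
  split_ifs <;> first | omega | simp

lemma wfun_col_disj (M : List ℤ) {i j : ℕ} (k : ℕ) (h : i ≠ j) :
    wfun M k i * wfun M k j = 0 := by
  unfold wfun
  split_ifs <;> first | omega | simp

lemma row_sum (M : List ℤ) (i : Fin (M.length + 1)) :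
    ∑ k : Fin (M.length + 1), wfun M i k =
      if ((i:ℕ) % 2 = 0 ∧ seqAt M i = -1) ∨ ((i:ℕ) % 2 = 1 ∧ seqAt M ((i:ℕ)-1) = 1)
      then 1 else 0 := by
  split_ifs with hc
  · rcases hc with ⟨he, ha⟩ | ⟨ho, ha⟩
    · have hlt : (i:ℕ) < M.length := seqAt_lt (by omega)
      have hk : (i:ℕ) + 1 < M.length + 1 := by omega
      rw [Finset.sum_eq_single_of_mem (⟨(i:ℕ)+1, hk⟩ : Fin (M.length+1)) (Finset.mem_univ _)]
      · unfold wfun; simp [he, ha]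
      · intro b _ hb
        unfold wfun
        split_ifs with c1 c2
        · exact absurd (Fin.ext (c1.2.2 : (b:ℕ) = (i:ℕ)+1)) hb
        · omega
        · rfl
    · have h1 : 1 ≤ (i:ℕ) := by omega
      have hk : (i:ℕ) - 1 < M.length + 1 := by omega
      rw [Finset.sum_eq_single_of_mem (⟨(i:ℕ)-1, hk⟩ : Fin (M.length+1)) (Finset.mem_univ _)]
      · unfold wfun
        have : (i:ℕ) - 1 + 1 = (i:ℕ) := by omega
        simp [ho, ha, this]
      · intro b _ hb
        unfold wfun
        split_ifs with c1 c2
        · omega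
        · refine absurd (Fin.ext ?_) hb
          show (b:ℕ) = (i:ℕ) - 1
          omega
        · rfl
  · apply Finset.sum_eq_zero
    intro k _
    unfold wfun
    split_ifs with c1 c2 <;>
      first
        | (exfalso; exact hc (Or.inl ⟨c1.1, c1.2.1⟩))
        | (exfalso; exact hc (Or.inr ⟨c2.1, c2.2.1⟩))
        | rfl

lemma col_sum (M : List ℤ) (i : Fin (M.length + 1)) :
    ∑ k : Fin (M.length + 1), wfun M k i =
      if ((i:ℕ) % 2 = 1 ∧ seqAt M ((i:ℕ)-1) = -1) ∨ ((i:ℕ) % 2 = 0 ∧ seqAt M i = 1)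
      then 1 else 0 := by
  split_ifs with hc
  · rcases hc with ⟨ho, ha⟩ | ⟨he, ha⟩
    · have h1 : 1 ≤ (i:ℕ) := by omega
      have hk : (i:ℕ) - 1 < M.length + 1 := by omega
      rw [Finset.sum_eq_single_of_mem (⟨(i:ℕ)-1, hk⟩ : Fin (M.length+1)) (Finset.mem_univ _)]
      · unfold wfun
        have h2 : ((i:ℕ)-1) % 2 = 0 := by omega
        have h3 : (i:ℕ) = (i:ℕ) - 1 + 1 := by omega
        simp [h2, ha]
        omega
      · intro b _ hb
        unfold wfun
        split_ifs with c1 c2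
        · refine absurd (Fin.ext ?_) hb
          show (b:ℕ) = (i:ℕ) - 1
          omega
        · omega
        · rfl
    · have hlt : (i:ℕ) < M.length := seqAt_lt (by omega)
      have hk : (i:ℕ) + 1 < M.length + 1 := by omega
      rw [Finset.sum_eq_single_of_mem (⟨(i:ℕ)+1, hk⟩ : Fin (M.length+1)) (Finset.mem_univ _)]
      · unfold wfun
        have h2 : ((i:ℕ)+1) % 2 = 1 := by omega
        simp [h2, ha]
      · intro b _ hb
        unfold wfun
        split_ifs with c1 c2
        · omega
        · refine absurd (Fin.ext ?_) hb
          show (b:ℕ) = (i:ℕ) + 1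
          omega
        · rfl
  · apply Finset.sum_eq_zero
    intro k _
    unfold wfun
    split_ifs with c1 c2
    · exfalso
      obtain ⟨hk, ha, hik⟩ := c1
      refine hc (Or.inl ⟨by omega, ?_⟩)
      have : (i:ℕ) - 1 = (k:ℕ) := by omega
      rw [this]; exact ha
    · exfalso
      obtain ⟨hk, ha, hik⟩ := c2
      refine hc (Or.inr ⟨by omega, ?_⟩)
      have : (k:ℕ) - 1 = (i:ℕ) := by omega
      rw [this] at ha; exact ha
    · rfl

lemma diag_sum (M : List ℤ) (hM : StdParams M) (i : Fin (M.length + 1)) :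
    (if ((i:ℕ) % 2 = 0 ∧ seqAt M i = -1) ∨ ((i:ℕ) % 2 = 1 ∧ seqAt M ((i:ℕ)-1) = 1)
      then (1:F2) else 0) +
    (if ((i:ℕ) % 2 = 1 ∧ seqAt M ((i:ℕ)-1) = -1) ∨ ((i:ℕ) % 2 = 0 ∧ seqAt M i = 1)
      then (1:F2) else 0) =
    1 + (if (i:ℕ) = M.length then 1 else 0) := by
  obtain ⟨hlen, hval⟩ := hM
  have hi := i.isLt
  by_cases hL : (i:ℕ) = M.length
  · have h0 : seqAt M (i:ℕ) = 0 := by rw [hL]; exact seqAt_len M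
    split_ifs with c1 c2 <;> first | decide | (exfalso; omega)
  · by_cases hp : (i:ℕ) % 2 = 0
    · have hv := hval i (by omega)
      rw [if_pos hp] at hv
      split_ifs with c1 c2 <;> first | decide | (exfalso; omega)
    · have h1 : (i:ℕ) - 1 < M.length := by omega
      have hv := hval ((i:ℕ)-1) h1
      rw [if_pos (by omega : ((i:ℕ)-1) % 2 = 0)] at hv
      split_ifs with c1 c2 <;> first | decide | (exfalso; omega)

/-- The mod-`U` matrix of `ω` on a standard complex. -/
def WH (M : List ℤ) : Matrix (Fin (M.length+1)) (Fin (M.length+1)) F2 :=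
  Matrix.of fun i j => wfun M i j

/-- Projection onto the last generator. -/
def PH (n : ℕ) : Matrix (Fin (n+1)) (Fin (n+1)) F2 :=
  Matrix.of fun i j => if (i:ℕ) = n ∧ (j:ℕ) = n then 1 else 0

lemma wfun_lastrow (M : List ℤ) (hM : StdParams M) {i : ℕ} (hi : i = M.length) (j : ℕ) :
    wfun M i j = 0 := by
  have h0 : seqAt M i = 0 := by rw [hi]; exact seqAt_len M
  obtain ⟨hlen, -⟩ := hM
  unfold wfun
  split_ifs with c1 c2 <;> first | rfl | (exfalso; omega)

lemma wfun_lastcol (M : List ℤ) (hM : StdParams M) {j : ℕ} (hj : j = M.length)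
    {i : ℕ} (hilt : i < M.length + 1) : wfun M i j = 0 := by
  obtain ⟨hlen, -⟩ := hM
  unfold wfun
  split_ifs with c1 c2 <;> first | rfl | (exfalso; omega)

lemma WH_mul_WH (M : List ℤ) : WH M * WH M = 0 := by
  ext i j
  rw [Matrix.mul_apply]
  exact Finset.sum_eq_zero fun k _ => wfun_mul_wfun M i k j

lemma WH_mul_PH (M : List ℤ) (hM : StdParams M) : WH M * PH M.length = 0 := by
  ext i j
  rw [Matrix.mul_apply]
  refine Finset.sum_eq_zero fun k _ => ?_
  show wfun M i k * (if (k:ℕ) = M.length ∧ (j:ℕ) = M.length then 1 else 0) = 0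
  split_ifs with h
  · rw [wfun_lastcol M hM h.1 i.isLt]; ring
  · ring

lemma PH_mul_WH (M : List ℤ) (hM : StdParams M) : PH M.length * WH M = 0 := by
  ext i j
  rw [Matrix.mul_apply]
  refine Finset.sum_eq_zero fun k _ => ?_
  show (if (i:ℕ) = M.length ∧ (k:ℕ) = M.length then 1 else 0) * wfun M k j = 0
  split_ifs with h
  · rw [wfun_lastrow M hM h.2]; ring
  · ring

lemma WH_anti (M : List ℤ) (hM : StdParams M) :
    WH M * (WH M)ᵀ + (WH M)ᵀ * WH M = 1 + PH M.length := by
  ext i j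
  rw [Matrix.add_apply, Matrix.add_apply, Matrix.mul_apply, Matrix.mul_apply]
  by_cases hij : i = j
  · subst hij
    have e1 : ∀ k : Fin (M.length+1), WH M i k * (WH M)ᵀ k i = wfun M i k := by
      intro k; show wfun M i k * wfun M i k = _; exact F2_mul_self _
    have e2 : ∀ k : Fin (M.length+1), (WH M)ᵀ i k * WH M k i = wfun M k i := by
      intro k; show wfun M k i * wfun M k i = _; exact F2_mul_self _
    rw [Finset.sum_congr rfl (fun k _ => e1 k), Finset.sum_congr rfl (fun k _ => e2 k),
      row_sum, col_sum, diag_sum M hM i]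
    congr 1
    · exact (Matrix.one_apply_eq i).symm
    · show _ = (if (i:ℕ) = M.length ∧ (i:ℕ) = M.length then (1:F2) else 0)
      simp
  · have hv : (i:ℕ) ≠ (j:ℕ) := fun h => hij (Fin.ext h)
    have s1 : ∑ k : Fin (M.length+1), WH M i k * (WH M)ᵀ k j = 0 :=
      Finset.sum_eq_zero fun k _ => wfun_row_disj M (k:ℕ) hv
    have s2 : ∑ k : Fin (M.length+1), (WH M)ᵀ i k * WH M k j = 0 :=
      Finset.sum_eq_zero fun k _ => wfun_col_disj M (k:ℕ) hv
    rw [s1, s2, Matrix.one_apply_ne hij]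
    show (0:F2) + 0 = 0 + (if (i:ℕ) = M.length ∧ (j:ℕ) = M.length then 1 else 0)
    rw [if_neg (fun h => hv (h.1.trans h.2.symm))]

/-! ### The Kronecker product in `finProdFinEquiv` coordinates -/

def kron {a b : ℕ} (A : Matrix (Fin a) (Fin a) F2) (B : Matrix (Fin b) (Fin b) F2) :
    Matrix (Fin (a*b)) (Fin (a*b)) F2 :=
  Matrix.reindex finProdFinEquiv finProdFinEquiv (A ⊗ₖ B)

lemma kron_apply {a b : ℕ} (A : Matrix (Fin a) (Fin a) F2) (B : Matrix (Fin b) (Fin b) F2)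
    (q p : Fin (a*b)) :
    kron A B q p = A (finProdFinEquiv.symm q).1 (finProdFinEquiv.symm p).1 *
      B (finProdFinEquiv.symm q).2 (finProdFinEquiv.symm p).2 := rfl

lemma kron_mul {a b : ℕ} (A C : Matrix (Fin a) (Fin a) F2) (B D : Matrix (Fin b) (Fin b) F2) :
    kron A B * kron C D = kron (A * C) (B * D) := by
  unfold kron
  rw [Matrix.reindex_apply, Matrix.reindex_apply, Matrix.submatrix_mul_equiv,
    ← Matrix.mul_kronecker_mul, Matrix.reindex_apply]

lemma kron_one {a b : ℕ} :
    kron (1 : Matrix (Fin a) (Fin a) F2) (1 : Matrix (Fin b) (Fin b) F2) = 1 := by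
  unfold kron
  rw [Matrix.one_kronecker_one, Matrix.reindex_apply, Matrix.submatrix_one_equiv]

lemma kron_add_left {a b : ℕ} (A A' : Matrix (Fin a) (Fin a) F2) (B : Matrix (Fin b) (Fin b) F2) :
    kron (A + A') B = kron A B + kron A' B := by
  ext q p
  simp [kron_apply, Matrix.add_apply, add_mul]

lemma kron_add_right {a b : ℕ} (A : Matrix (Fin a) (Fin a) F2) (B B' : Matrix (Fin b) (Fin b) F2) :
    kron A (B + B') = kron A B + kron A B' := by
  ext q p
  simp [kron_apply, Matrix.add_apply, mul_add]

lemma expand_comm {n : ℕ} (K h : Matrix (Fin n) (Fin n) F2) :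
    (1 + K) * h + h * (1 + K) = K * h + h * K := by
  rw [add_mul, mul_add, one_mul, mul_one]
  calc h + K * h + (h + h * K) = (h + h) + (K * h + h * K) := by abel
    _ = K * h + h * K := by rw [Mat_add_self, zero_add]

lemma sq_one {n : ℕ} (W : Matrix (Fin n) (Fin n) F2) (h : W * W = 0) :
    (1 + W) * (1 + W) = 1 := by
  rw [add_mul, one_mul, mul_add, mul_one, h, add_zero, add_assoc, Mat_add_self, add_zero]

lemma anti_one {n : ℕ} (W P : Matrix (Fin n) (Fin n) F2)
    (h : W * Wᵀ + Wᵀ * W = 1 + P) :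
    (1 + W) * Wᵀ + Wᵀ * (1 + W) = 1 + P := by
  rw [add_mul, mul_add, one_mul, mul_one]
  calc Wᵀ + W * Wᵀ + (Wᵀ + Wᵀ * W) = (Wᵀ + Wᵀ) + (W * Wᵀ + Wᵀ * W) := by abel
    _ = 1 + P := by rw [Mat_add_self, h, zero_add]

/-- The main homotopy identity. -/
lemma homotopy_identity {a b : ℕ}
    (W₁ P₁ : Matrix (Fin a) (Fin a) F2) (W₂ P₂ : Matrix (Fin b) (Fin b) F2)
    (h2sq : W₂ * W₂ = 0)
    (h1a : W₁ * W₁ᵀ + W₁ᵀ * W₁ = 1 + P₁)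
    (h2a : W₂ * W₂ᵀ + W₂ᵀ * W₂ = 1 + P₂)
    (hWP : W₁ * P₁ = 0) (hPW : P₁ * W₁ = 0) :
    (1 + kron (1 + W₁) (1 + W₂)) * (kron W₁ᵀ (1 + W₂) + kron P₁ W₂ᵀ)
      + (kron W₁ᵀ (1 + W₂) + kron P₁ W₂ᵀ) * (1 + kron (1 + W₁) (1 + W₂))
      = 1 + kron P₁ P₂ := by
  have hIP : (1 + W₁) * P₁ = P₁ := by rw [add_mul, one_mul, hWP, add_zero]
  have hPI : P₁ * (1 + W₁) = P₁ := by rw [mul_add, mul_one, hPW, add_zero]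
  rw [expand_comm]
  rw [mul_add, add_mul, kron_mul, kron_mul, kron_mul, kron_mul, sq_one W₂ h2sq, hIP, hPI]
  calc kron ((1 + W₁) * W₁ᵀ) 1 + kron P₁ ((1 + W₂) * W₂ᵀ)
        + (kron (W₁ᵀ * (1 + W₁)) 1 + kron P₁ (W₂ᵀ * (1 + W₂)))
      = kron ((1 + W₁) * W₁ᵀ + W₁ᵀ * (1 + W₁)) 1
        + kron P₁ ((1 + W₂) * W₂ᵀ + W₂ᵀ * (1 + W₂)) := by
        rw [kron_add_left, kron_add_right]; abel
    _ = kron (1 + P₁) 1 + kron P₁ (1 + P₂) := by rw [anti_one W₁ P₁ h1a, anti_one W₂ P₂ h2a]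
    _ = 1 + kron P₁ 1 + (kron P₁ 1 + kron P₁ P₂) := by
        rw [kron_add_left, kron_add_right, kron_one]
    _ = 1 + kron P₁ P₂ := by
        rw [add_assoc, ← add_assoc (kron P₁ 1), Mat_add_self, zero_add]

/-! ### Glue: the hat matrix of `ω` on the tensor product -/

lemma ofMatrix_e {n : ℕ} (c : ℕ → ℕ → R) (i j : Fin n) :
    ofMatrix c (e i) j = c (i:ℕ) (j:ℕ) := by
  have h : ofMatrix c (e i) j = ∑ k : Fin n, e i k * c (k:ℕ) (j:ℕ) := rfl
  rw [h]
  simp [e, ite_mul]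

lemma tmap_e {a b a' b' : ℕ} (f : V a →ₗ[R] V a') (g : V b →ₗ[R] V b')
    (q : Fin (a*b)) (p : Fin (a'*b')) :
    tmap f g (e q) p = f (e (finProdFinEquiv.symm q).1) (finProdFinEquiv.symm p).1 *
      g (e (finProdFinEquiv.symm q).2) (finProdFinEquiv.symm p).2 := by
  have h : tmap f g (e q) p = ∑ k : Fin (a*b),
      (e q) k * f (e (finProdFinEquiv.symm k).1) (finProdFinEquiv.symm p).1
        * g (e (finProdFinEquiv.symm k).2) (finProdFinEquiv.symm p).2 := rfl
  rw [h]
  simp [e, ite_mul]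

lemma wCoef_coeff (M : List ℤ) (i j : ℕ) : (wCoef M i j).coeff 0 = wfun M i j := by
  unfold wCoef wfun
  split_ifs <;> simp

lemma iCoef_coeff (M : List ℤ) (i j : Fin (M.length+1)) :
    (iCoef M (i:ℕ) (j:ℕ)).coeff 0 = (1 + WH M) i j := by
  rw [Matrix.add_apply]
  unfold iCoef
  rw [Polynomial.coeff_add, wCoef_coeff]
  congr 1
  by_cases h : i = j
  · subst h
    rw [Matrix.one_apply_eq, if_pos rfl, Polynomial.coeff_one_zero]
  · rw [Matrix.one_apply_ne h, if_neg (fun hh => h (Fin.ext hh))]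
    exact Polynomial.coeff_zero 0

/-- The hat matrix of `ω` on the tensor product. -/
def OmM (M M' : List ℤ) :
    Matrix (Fin ((M.length+1)*(M'.length+1))) (Fin ((M.length+1)*(M'.length+1))) F2 :=
  1 + kron (1 + WH M) (1 + WH M')

/-- The homotopy matrix. -/
def HmM (M M' : List ℤ) :
    Matrix (Fin ((M.length+1)*(M'.length+1))) (Fin ((M.length+1)*(M'.length+1))) F2 :=
  kron (WH M)ᵀ (1 + WH M') + kron (PH M.length) (WH M')ᵀ

/-- Projection onto the class of `T_{2m} ⊗ T_{2n}'`. -/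
def PmM (M M' : List ℤ) :
    Matrix (Fin ((M.length+1)*(M'.length+1))) (Fin ((M.length+1)*(M'.length+1))) F2 :=
  kron (PH M.length) (PH M'.length)

/-- The distinguished generator index. -/
def tL (M M' : List ℤ) : Fin ((M.length+1)*(M'.length+1)) :=
  finProdFinEquiv (⟨M.length, Nat.lt_succ_self _⟩, ⟨M'.length, Nat.lt_succ_self _⟩)

lemma main_identity (M M' : List ℤ) (hM : StdParams M) (hM' : StdParams M') :
    OmM M M' * HmM M M' + HmM M M' * OmM M M' = 1 + PmM M M' :=
  homotopy_identity (WH M) (PH M.length) (WH M') (PH M'.length)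
    (WH_mul_WH M') (WH_anti M hM) (WH_anti M' hM') (WH_mul_PH M hM) (PH_mul_WH M hM)

lemma omega_entry (M M' : List ℤ) (q p : Fin ((M.length+1)*(M'.length+1))) :
    ((omega (tensorAI (symCplx M) (symCplx M')) (e q)) p).coeff 0 = OmM M M' q p := by
  have h1 : (omega (tensorAI (symCplx M) (symCplx M')) (e q)) p
      = e q p + tmap (ofMatrix (iCoef M)) (ofMatrix (iCoef M')) (e q) p := rfl
  rw [h1, Polynomial.coeff_add, tmap_e, ofMatrix_e, ofMatrix_e, Polynomial.mul_coeff_zero,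
    iCoef_coeff, iCoef_coeff]
  simp only [OmM, Matrix.add_apply, kron_apply]
  congr 1
  by_cases h : q = p
  · subst h
    rw [Matrix.one_apply_eq]
    show (if q = q then (1:R) else 0).coeff 0 = 1
    rw [if_pos rfl, Polynomial.coeff_one_zero]
  · rw [Matrix.one_apply_ne h]
    show (if p = q then (1:R) else 0).coeff 0 = 0
    rw [if_neg (Ne.symm h)]
    exact Polynomial.coeff_zero 0

lemma wHat_eq (M M' : List ℤ) (x : Fin ((M.length+1)*(M'.length+1)) → F2) :
    wHat (tensorAI (symCplx M) (symCplx M')) x = x ᵥ* OmM M M' := by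
  funext p
  have hL : wHat (tensorAI (symCplx M) (symCplx M')) x p
      = ∑ q, x q * ((omega (tensorAI (symCplx M) (symCplx M')) (e q)) p).coeff 0 := rfl
  have hR : (x ᵥ* OmM M M') p = ∑ q, x q * OmM M M' q p := rfl
  rw [hL, hR]
  exact Finset.sum_congr rfl fun q _ => by exact congrArg (x q * ·) (omega_entry M M' q p)

lemma e2_vecMul {n : ℕ} (t : Fin n) (A : Matrix (Fin n) (Fin n) F2) (p : Fin n) :
    (e2 t ᵥ* A) p = A t p := by
  have h : (e2 t ᵥ* A) p = ∑ q : Fin n, e2 t q * A q p := rfl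
  rw [h]
  simp [e2, ite_mul]

lemma eq_tL_iff (M M' : List ℤ) (q : Fin ((M.length+1)*(M'.length+1))) :
    q = tL M M' ↔ (((finProdFinEquiv.symm q).1 : ℕ) = M.length ∧
      ((finProdFinEquiv.symm q).2 : ℕ) = M'.length) := by
  unfold tL
  rw [← Equiv.symm_apply_eq, Prod.ext_iff, Fin.ext_iff, Fin.ext_iff]

lemma symm_tL (M M' : List ℤ) :
    finProdFinEquiv.symm (tL M M')
      = ((⟨M.length, Nat.lt_succ_self _⟩ : Fin (M.length+1)),
         (⟨M'.length, Nat.lt_succ_self _⟩ : Fin (M'.length+1))) :=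
  Equiv.symm_apply_apply _ _

lemma one_add_WH_lastrow (M : List ℤ) (hM : StdParams M) (pa : Fin (M.length+1)) :
    (1 + WH M) (⟨M.length, Nat.lt_succ_self _⟩ : Fin (M.length+1)) pa
      = if (pa:ℕ) = M.length then 1 else 0 := by
  rw [Matrix.add_apply]
  have h1 : WH M (⟨M.length, Nat.lt_succ_self _⟩ : Fin (M.length+1)) pa = 0 :=
    wfun_lastrow M hM rfl pa
  rw [h1, add_zero, Matrix.one_apply]
  by_cases h : (pa:ℕ) = M.length
  · rw [if_pos (Fin.ext h.symm), if_pos h]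
  · rw [if_neg (fun hh => h (congrArg Fin.val hh).symm), if_neg h]

lemma one_add_WH_lastcol (M : List ℤ) (hM : StdParams M) (qa : Fin (M.length+1)) :
    (1 + WH M) qa (⟨M.length, Nat.lt_succ_self _⟩ : Fin (M.length+1))
      = if (qa:ℕ) = M.length then 1 else 0 := by
  rw [Matrix.add_apply]
  have h1 : WH M qa (⟨M.length, Nat.lt_succ_self _⟩ : Fin (M.length+1)) = 0 :=
    wfun_lastcol M hM rfl qa.isLt
  rw [h1, add_zero, Matrix.one_apply]
  by_cases h : (qa:ℕ) = M.length
  · rw [if_pos (Fin.ext h), if_pos h]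
  · rw [if_neg (fun hh => h (congrArg Fin.val hh)), if_neg h]

lemma OmM_last_row (M M' : List ℤ) (hM : StdParams M) (hM' : StdParams M')
    (p : Fin ((M.length+1)*(M'.length+1))) : OmM M M' (tL M M') p = 0 := by
  unfold OmM
  rw [Matrix.add_apply, kron_apply, symm_tL, one_add_WH_lastrow M hM,
    one_add_WH_lastrow M' hM']
  by_cases hp : p = tL M M'
  · subst hp
    rw [Matrix.one_apply_eq, symm_tL]
    show (1:F2) + (if M.length = M.length then 1 else 0) * (if M'.length = M'.length then 1 else 0) = 0
    rw [if_pos rfl, if_pos rfl]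
    decide
  · rw [Matrix.one_apply_ne (fun hh => hp hh.symm)]
    have hnot : ¬((((finProdFinEquiv.symm p).1 : ℕ) = M.length) ∧
        (((finProdFinEquiv.symm p).2 : ℕ) = M'.length)) :=
      fun hc => hp ((eq_tL_iff M M' p).mpr hc)
    rcases not_and_or.mp hnot with h | h
    · rw [if_neg h, zero_mul, add_zero]
    · rw [if_neg h, mul_zero, add_zero]

lemma OmM_last_col (M M' : List ℤ) (hM : StdParams M) (hM' : StdParams M')
    (q : Fin ((M.length+1)*(M'.length+1))) : OmM M M' q (tL M M') = 0 := by
  unfold OmM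
  rw [Matrix.add_apply, kron_apply, symm_tL, one_add_WH_lastcol M hM,
    one_add_WH_lastcol M' hM']
  by_cases hq : q = tL M M'
  · subst hq
    rw [Matrix.one_apply_eq, symm_tL]
    show (1:F2) + (if M.length = M.length then 1 else 0) * (if M'.length = M'.length then 1 else 0) = 0
    rw [if_pos rfl, if_pos rfl]
    decide
  · rw [Matrix.one_apply_ne hq]
    have hnot : ¬((((finProdFinEquiv.symm q).1 : ℕ) = M.length) ∧
        (((finProdFinEquiv.symm q).2 : ℕ) = M'.length)) :=
      fun hc => hq ((eq_tL_iff M M' q).mpr hc)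
    rcases not_and_or.mp hnot with h | h
    · rw [if_neg h, zero_mul, add_zero]
    · rw [if_neg h, mul_zero, add_zero]

lemma PmM_entry (M M' : List ℤ) (q p : Fin ((M.length+1)*(M'.length+1))) :
    PmM M M' q p = (if q = tL M M' then (1:F2) else 0) * (if p = tL M M' then 1 else 0) := by
  unfold PmM
  rw [kron_apply]
  show (if ((finProdFinEquiv.symm q).1:ℕ) = M.length ∧ ((finProdFinEquiv.symm p).1:ℕ) = M.length
      then (1:F2) else 0) *
    (if ((finProdFinEquiv.symm q).2:ℕ) = M'.length ∧ ((finProdFinEquiv.symm p).2:ℕ) = M'.length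
      then (1:F2) else 0) = _
  by_cases hq : q = tL M M'
  · by_cases hp : p = tL M M'
    · obtain ⟨hq1, hq2⟩ := (eq_tL_iff M M' q).mp hq
      obtain ⟨hp1, hp2⟩ := (eq_tL_iff M M' p).mp hp
      rw [if_pos ⟨hq1, hp1⟩, if_pos ⟨hq2, hp2⟩, if_pos hq, if_pos hp]
    · rcases not_and_or.mp (fun hc => hp ((eq_tL_iff M M' p).mpr hc)) with h | h
      · rw [if_neg (show ¬(((finProdFinEquiv.symm q).1:ℕ) = M.length ∧
            ((finProdFinEquiv.symm p).1:ℕ) = M.length) from fun hc => h hc.2),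
          zero_mul, if_neg hp, mul_zero]
      · rw [if_neg (show ¬(((finProdFinEquiv.symm q).2:ℕ) = M'.length ∧
            ((finProdFinEquiv.symm p).2:ℕ) = M'.length) from fun hc => h hc.2),
          mul_zero, if_neg hp, mul_zero]
  · rcases not_and_or.mp (fun hc => hq ((eq_tL_iff M M' q).mpr hc)) with h | h
    · rw [if_neg (show ¬(((finProdFinEquiv.symm q).1:ℕ) = M.length ∧
          ((finProdFinEquiv.symm p).1:ℕ) = M.length) from fun hc => h hc.1),
        zero_mul, if_neg hq, zero_mul]
    · rw [if_neg (show ¬(((finProdFinEquiv.symm q).2:ℕ) = M'.length ∧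
          ((finProdFinEquiv.symm p).2:ℕ) = M'.length) from fun hc => h hc.1),
        mul_zero, if_neg hq, zero_mul]

lemma vecMul_PmM (M M' : List ℤ) (x : Fin ((M.length+1)*(M'.length+1)) → F2) :
    x ᵥ* PmM M M' = x (tL M M') • e2 (tL M M') := by
  funext p
  have h : (x ᵥ* PmM M M') p = ∑ q, x q * PmM M M' q p := rfl
  rw [h]
  have h2 : ∀ q, x q * PmM M M' q p
      = x q * ((if q = tL M M' then (1:F2) else 0) * (if p = tL M M' then 1 else 0)) := by
    intro q; rw [PmM_entry]
  rw [Finset.sum_congr rfl fun q _ => h2 q]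
  rw [Finset.sum_eq_single_of_mem (tL M M') (Finset.mem_univ _)]
  · show x (tL M M') * ((if _ then _ else _) * _) = (x (tL M M') • e2 (tL M M')) p
    rw [if_pos rfl, one_mul]
    show _ = x (tL M M') * (if p = tL M M' then 1 else 0)
    rfl
  · intro b _ hb
    rw [if_neg hb, zero_mul, mul_zero]

end AI

namespace AI

open Matrix Kronecker

/-- the `ω`-homology of a tensor product of standard complexes is
one-dimensional, generated by the class of `T_{2m} ⊗ T_{2n}'`. -/
theorem omega_homology_tensor (M M' : List ℤ) (hM : StdParams M) (hM' : StdParams M')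
    (g : Fin (tensorAI (symCplx M) (symCplx M')).n → F2)
    (hg : g = e2 (finProdFinEquiv
      (⟨M.length, Nat.lt_succ_self _⟩, ⟨M'.length, Nat.lt_succ_self _⟩))) :
    wHat (tensorAI (symCplx M) (symCplx M')) g = 0 ∧
    (¬ ∃ y, wHat (tensorAI (symCplx M) (symCplx M')) y = g) ∧
    (∀ x, wHat (tensorAI (symCplx M) (symCplx M')) x = 0 →
      (∃ y, wHat (tensorAI (symCplx M) (symCplx M')) y = x) ∨
      (∃ y, wHat (tensorAI (symCplx M) (symCplx M')) y = x + g)) := by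
  have hg2 : g = e2 (tL M M') := hg
  subst hg2
  refine ⟨?_, ?_, ?_⟩
  · rw [wHat_eq]
    funext p
    rw [e2_vecMul (tL M M') (OmM M M') p, OmM_last_row M M' hM hM']
    rfl
  · rintro ⟨y, hy⟩
    change (Fin ((M.length+1)*(M'.length+1)) → F2) at y
    replace hy := (wHat_eq M M' y).symm.trans hy
    have h2 := congrFun hy (tL M M')
    have hL : (y ᵥ* OmM M M') (tL M M') = 0 := by
      have h : (y ᵥ* OmM M M') (tL M M') = ∑ q, y q * OmM M M' q (tL M M') := rfl
      rw [h]
      exact Finset.sum_eq_zero fun q _ => by rw [OmM_last_col M M' hM hM', mul_zero]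
    rw [hL] at h2
    have h3 : e2 (tL M M') (tL M M') = 1 := if_pos rfl
    rw [h3] at h2
    exact absurd h2 (by decide)
  · intro x hx
    change (Fin ((M.length+1)*(M'.length+1)) → F2) at x
    replace hx := (wHat_eq M M' x).symm.trans hx
    have h0 : x ᵥ* (OmM M M' * HmM M M') = 0 := by
      rw [← Matrix.vecMul_vecMul, hx]
      exact Matrix.zero_vecMul _
    have key : ∀ p, (x ᵥ* (HmM M M' * OmM M M')) p
        = x p + x (tL M M') * e2 (tL M M') p := by
      intro p
      have h1 : x ᵥ* (OmM M M' * HmM M M' + HmM M M' * OmM M M')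
          = x ᵥ* (HmM M M' * OmM M M') := by
        rw [Matrix.vecMul_add, h0, zero_add]
      rw [← h1, main_identity M M' hM hM', Matrix.vecMul_add, Matrix.vecMul_one, vecMul_PmM]
      rfl
    have hy : ∀ p, wHat (tensorAI (symCplx M) (symCplx M')) (x ᵥ* HmM M M') p
        = x p + x (tL M M') * e2 (tL M M') p := by
      intro p
      exact (congrFun (wHat_eq M M' (x ᵥ* HmM M M')) p).trans
        ((congrFun (Matrix.vecMul_vecMul x (HmM M M') (OmM M M')) p).trans (key p))
    rcases F2_zero_or_one (x (tL M M')) with h | h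
    · left
      refine ⟨x ᵥ* HmM M M', funext fun p => ?_⟩
      rw [hy p, h, zero_mul, add_zero]
    · right
      refine ⟨x ᵥ* HmM M M', funext fun p => ?_⟩
      rw [hy p, h, one_mul]
      rfl
end AI
end
end

section
/- Non-realizability: if A is an almost ι-complex whose associated standard complex has initial parameters (a_1, b_2) = (−1, −i) with i > 0 (or dually (+1, i)), then A is not locally equivalent (as an almost ι-complex) to any genuine ι-complex, i.e., one in which ι is an honest chain map with ι² chain homotopic to the identity. In particular the forgetful homomorphism from ι-complexes modulo local equivalence to almost ι-complexes modulo local equivalence is not surjective. -/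
open Polynomial

noncomputable section

namespace AI

lemma r_add_self (r : R) : r + r = 0 := by
  have h2 : (2 : R) = 0 := by
    have h : (2 : R) = Polynomial.C (2 : F2) := (map_ofNat Polynomial.C 2).symm
    rw [h, show (2 : F2) = 0 from rfl, map_zero]
  calc r + r = 2 * r := by ring
  _ = 0 := by rw [h2, zero_mul]

lemma v_add_self {n : ℕ} (x : V n) : x + x = 0 := funext fun j => r_add_self (x j)

lemma eqR_of_add {a b : R} (h : a + b = 0) : a = b := by
  have := r_add_self b
  linear_combination h - this

lemma eqV_of_add {n : ℕ} {a b : V n} (h : a + b = 0) : a = b := by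
  funext j
  exact eqR_of_add (by have := congrFun h j; simpa using this)

lemma Uu_ne_zero : (Uu : R) ≠ 0 := Polynomial.X_ne_zero

lemma Uu_pow_ne_zero (k : ℕ) : (Uu ^ k : R) ≠ 0 := pow_ne_zero _ Uu_ne_zero

lemma modU_exists {n : ℕ} {u : V n} (h : modU u) : ∃ v : V n, u = Uu • v := by
  refine ⟨fun j => (u j).divX, funext fun j => ?_⟩
  have := Polynomial.X_mul_divX_add (u j)
  simp only [h j, map_zero, add_zero] at this
  simpa [Uu, Pi.smul_apply, smul_eq_mul] using this.symm

lemma modU_Usmul {n : ℕ} (v : V n) : modU (Uu • v) := by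
  intro j
  simp [Uu, Pi.smul_apply, smul_eq_mul, Polynomial.mul_coeff_zero]

lemma modU_add {n : ℕ} {u v : V n} (hu : modU u) (hv : modU v) : modU (u + v) := by
  intro j; simp [Pi.add_apply, hu j, hv j]

lemma modU_map {m n : ℕ} (f : V m →ₗ[R] V n) {u : V m} (h : modU u) : modU (f u) := by
  obtain ⟨v, rfl⟩ := modU_exists h
  rw [map_smul]
  exact modU_Usmul _

/-- Evaluation of a linear map via the basis. -/
lemma apply_eq_sum {m n : ℕ} (f : V m →ₗ[R] V n) (x : V m) (j : Fin n) :
    f x j = ∑ i : Fin m, x i * f (e i) j := by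
  have hx : x = ∑ i : Fin m, x i • e i := by
    funext k
    simp [e, Finset.sum_apply, Pi.smul_apply, smul_eq_mul]
  calc f x j = f (∑ i : Fin m, x i • e i) j := by rw [← hx]
  _ = ∑ i : Fin m, x i * f (e i) j := by
      rw [map_sum]
      simp [Finset.sum_apply, Pi.smul_apply, smul_eq_mul]

lemma homog_add {n : ℕ} {gr : Fin n → ℤ} {c : ℤ} {x y : V n}
    (hx : IsHomog gr c x) (hy : IsHomog gr c y) : IsHomog gr c (x + y) := by
  intro j m h
  rcases (by by_contra hc; push_neg at hc; simp [Pi.add_apply, hc.1, hc.2] at h :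
      (x j).coeff m ≠ 0 ∨ (y j).coeff m ≠ 0) with h' | h'
  · exact hx j m h'
  · exact hy j m h'

lemma homog_map {m n : ℕ} {gr₁ : Fin m → ℤ} {gr₂ : Fin n → ℤ} {dg : ℤ}
    {f : V m →ₗ[R] V n} (hf : GradedMap gr₁ gr₂ dg f) {c : ℤ} {x : V m}
    (hx : IsHomog gr₁ c x) : IsHomog gr₂ (c + dg) (f x) := by
  intro j mm h
  rw [apply_eq_sum] at h
  rw [Polynomial.finset_sum_coeff] at h
  obtain ⟨i, -, hi⟩ := Finset.exists_ne_zero_of_sum_ne_zero h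
  rw [Polynomial.coeff_mul] at hi
  obtain ⟨⟨a, b⟩, hab, habne⟩ := Finset.exists_ne_zero_of_sum_ne_zero hi
  rw [Finset.HasAntidiagonal.mem_antidiagonal] at hab
  have hxa : (x i).coeff a ≠ 0 := fun h0 => habne (by simp [h0])
  have hfb : ((f (e i)) j).coeff b ≠ 0 := fun h0 => habne (by simp [h0])
  have h1 := hx i a hxa
  have h2 := hf i j b hfb
  have h3 : a + b = mm := hab
  have : (mm : ℤ) = (a : ℤ) + (b : ℤ) := by exact_mod_cast h3.symm
  omega

lemma homog_of_Usmul {n : ℕ} {gr : Fin n → ℤ} {c : ℤ} {v : V n}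
    (h : IsHomog gr c (Uu • v)) : IsHomog gr (c + 2) v := by
  intro j m hm
  have : ((Uu • v) j).coeff (m + 1) ≠ 0 := by
    simpa [Uu, Pi.smul_apply, smul_eq_mul, Polynomial.coeff_X_mul] using hm
  have := h j (m + 1) this
  push_cast at this ⊢
  omega

lemma homog_Upow_smul {n : ℕ} {gr : Fin n → ℤ} {c : ℤ} {x : V n} (k : ℕ)
    (h : IsHomog gr c x) : IsHomog gr (c - 2 * k) ((Uu ^ k) • x) := by
  intro j m hm
  simp only [Pi.smul_apply, smul_eq_mul, Uu] at hm
  rw [Polynomial.coeff_X_pow_mul'] at hm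
  by_cases hk : k ≤ m
  · rw [if_pos hk] at hm
    have := h j (m - k) hm
    have : (m : ℤ) - k = ((m - k : ℕ) : ℤ) := by push_cast [hk]; ring
    have h2 := h j (m - k) hm
    omega
  · simp [hk] at hm

lemma gradedMap_add {m n : ℕ} {gr₁ : Fin m → ℤ} {gr₂ : Fin n → ℤ} {dg : ℤ}
    {f g : V m →ₗ[R] V n} (hf : GradedMap gr₁ gr₂ dg f) (hg : GradedMap gr₁ gr₂ dg g) :
    GradedMap gr₁ gr₂ dg (f + g) := fun i => homog_add (hf i) (hg i)

lemma gradedMap_comp {m n p : ℕ} {gr₁ : Fin m → ℤ} {gr₂ : Fin n → ℤ} {gr₃ : Fin p → ℤ}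
    {d1 d2 : ℤ} {f : V m →ₗ[R] V n} {g : V n →ₗ[R] V p}
    (hf : GradedMap gr₁ gr₂ d1 f) (hg : GradedMap gr₂ gr₃ d2 g) :
    GradedMap gr₁ gr₃ (d1 + d2) (g ∘ₗ f) := by
  intro i
  have := homog_map hg (hf i)
  simpa [add_assoc] using this
lemma lm_add_self {m n : ℕ} (f : V m →ₗ[R] V n) : f + f = 0 :=
  LinearMap.ext fun x => by simpa using v_add_self (f x)

lemma isLocalMap_comp {C₁ C₂ C₃ : PreAI} {f : V C₁.n →ₗ[R] V C₂.n}
    {g : V C₂.n →ₗ[R] V C₃.n} (hf : isLocalMap C₁ C₂ f) (hg : isLocalMap C₂ C₃ g) :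
    isLocalMap C₁ C₃ (g ∘ₗ f) := by
  obtain ⟨⟨hfgr, hfchain, H, hHgr, hH⟩, hfloc⟩ := hf
  obtain ⟨⟨hggr, hgchain, K, hKgr, hK⟩, hgloc⟩ := hg
  refine ⟨⟨?_, ?_, ?_⟩, ?_⟩
  · have := gradedMap_comp hfgr hggr
    simpa using this
  · calc (g ∘ₗ f) ∘ₗ C₁.d = g ∘ₗ (f ∘ₗ C₁.d) := by rw [LinearMap.comp_assoc]
    _ = g ∘ₗ (C₂.d ∘ₗ f) := by rw [hfchain]
    _ = (g ∘ₗ C₂.d) ∘ₗ f := by rw [LinearMap.comp_assoc]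
    _ = (C₃.d ∘ₗ g) ∘ₗ f := by rw [hgchain]
    _ = C₃.d ∘ₗ (g ∘ₗ f) := by rw [LinearMap.comp_assoc]
  · refine ⟨g ∘ₗ H + K ∘ₗ f, ?_, ?_⟩
    · exact gradedMap_add (by simpa using gradedMap_comp hHgr hggr)
        (by simpa using gradedMap_comp hfgr hKgr)
    · intro x
      have key : ((g ∘ₗ f) ∘ₗ C₁.ι + C₃.ι ∘ₗ (g ∘ₗ f) + (g ∘ₗ H + K ∘ₗ f) ∘ₗ C₁.d
            + C₃.d ∘ₗ (g ∘ₗ H + K ∘ₗ f)) x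
          = g ((f ∘ₗ C₁.ι + C₂.ι ∘ₗ f + H ∘ₗ C₁.d + C₂.d ∘ₗ H) x)
            + (g ∘ₗ C₂.ι + C₃.ι ∘ₗ g + K ∘ₗ C₂.d + C₃.d ∘ₗ K) (f x) := by
        have hfd : f (C₁.d x) = C₂.d (f x) := by
          simpa using LinearMap.congr_fun hfchain x
        have hgd : ∀ y, g (C₂.d y) = C₃.d (g y) := fun y => by
          simpa using LinearMap.congr_fun hgchain y
        simp only [LinearMap.add_apply, LinearMap.comp_apply, map_add, hfd, hgd]
        abel_nf
        have h2 : (2 : ℤ) • g (C₂.ι (f x)) = 0 := by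
          rw [two_smul]; exact v_add_self _
        rw [h2, add_zero]
      rw [key]
      exact modU_add (modU_map g (hH x)) (hK (f x))
  · intro x hx
    exact hgloc _ (hfloc _ hx)
lemma ofMatrix_apply {n : ℕ} (c : ℕ → ℕ → R) (w : V n) (j : Fin n) :
    ofMatrix c w j = ∑ i : Fin n, w i * c i j := rfl

lemma symCplx_d_apply (M : List ℤ) (w : V (M.length + 1)) (j : Fin (M.length + 1)) :
    (symCplx M).d w j = ∑ i : Fin (M.length + 1), w i * dCoef M i j := rfl

lemma symCplx_i_apply (M : List ℤ) (w : V (M.length + 1)) (j : Fin (M.length + 1)) :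
    (symCplx M).ι w j = ∑ i : Fin (M.length + 1), w i * iCoef M i j := rfl

lemma sum_single {n : ℕ} (w : V n) (c : Fin n → R) (i₀ : Fin n)
    (h : ∀ i : Fin n, i ≠ i₀ → c i = 0) : ∑ i : Fin n, w i * c i = w i₀ * c i₀ :=
  Finset.sum_eq_single i₀ (fun i _ hi => by rw [h i hi, mul_zero]) (by simp)

lemma sum_zero {n : ℕ} (w : V n) (c : Fin n → R)
    (h : ∀ i : Fin n, c i = 0) : ∑ i : Fin n, w i * c i = 0 :=
  Finset.sum_eq_zero (fun i _ => by rw [h i, mul_zero])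

lemma dCoef_col_zero (M : List ℤ) (i : ℕ) : dCoef M i 0 = 0 := by
  have h1 : ¬ (i % 2 = 1 ∧ seqAt M i < 0 ∧ (0:ℕ) = i + 1) := by rintro ⟨-, -, h⟩; omega
  have h2 : ¬ (i % 2 = 0 ∧ 0 < i ∧ 0 < seqAt M (i - 1) ∧ (0:ℕ) + 1 = i) := by
    rintro ⟨ha, -, -, h⟩; omega
  rw [dCoef, if_neg h1, if_neg h2]

lemma dCoef_row_zero (M : List ℤ) (j : ℕ) : dCoef M 0 j = 0 := by
  have h1 : ¬ ((0:ℕ) % 2 = 1 ∧ seqAt M 0 < 0 ∧ j = 0 + 1) := by rintro ⟨h, -, -⟩; omega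
  have h2 : ¬ ((0:ℕ) % 2 = 0 ∧ 0 < (0:ℕ) ∧ 0 < seqAt M (0 - 1) ∧ j + 1 = 0) := by
    rintro ⟨-, h, -, -⟩; omega
  rw [dCoef, if_neg h1, if_neg h2]

lemma d_on_basis (M : List ℤ) (i j : Fin (M.length + 1)) :
    (symCplx M).d (e i) j = dCoef M i j := by
  erw [symCplx_d_apply]
  rw [Finset.sum_eq_single i (fun i' _ hi' => by simp [e]; exact fun h => absurd h hi') (by simp)]
  simp [e]; exact fun h => absurd rfl h

lemma i_on_basis (M : List ℤ) (i j : Fin (M.length + 1)) :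
    (symCplx M).ι (e i) j = iCoef M i j := by
  erw [symCplx_i_apply]
  rw [Finset.sum_eq_single i (fun i' _ hi' => by simp [e]; exact fun h => absurd h hi') (by simp)]
  simp [e]; exact fun h => absurd rfl h

/-- `d w` vanishes in the `T₀` slot. -/
lemma d_comp_zero (M : List ℤ) (w : V (M.length + 1)) (h0 : 0 < M.length + 1) :
    (symCplx M).d w ⟨0, h0⟩ = 0 := by
  erw [symCplx_d_apply]
  exact sum_zero _ _ fun i => dCoef_col_zero M i

lemma stdGr_zero (M : List ℤ) : stdGr M 0 = 0 := by simp [stdGr]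

lemma stdGr_one (M : List ℤ) : stdGr M 1 = 0 := by
  simp [stdGr, Finset.sum_range_one]

lemma symCplx_gr (M : List ℤ) (j : Fin (M.length + 1)) :
    (symCplx M).gr j = stdGr M j := rfl

/-- `e 0` is a nontorsion cycle in any `symCplx`. -/
lemma e0_nontorsion (M : List ℤ) (h0 : 0 < M.length + 1) :
    NontorsionClass (symCplx M).toPreCplx (e ⟨0, h0⟩) := by
  constructor
  · funext j
    erw [show ((0 : V (M.length+1)) j) = 0 from rfl, d_on_basis]
    exact dCoef_row_zero M j
  · rintro k ⟨y, hy⟩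
    have := congrFun hy ⟨0, h0⟩
    erw [symCplx_d_apply] at this
    erw [sum_zero _ _ (fun i => dCoef_col_zero M i)] at this
    have h2 : ((Uu ^ k) • e ⟨0, h0⟩ : V (M.length+1)) ⟨0, h0⟩ = Uu ^ k := by
      simp [e, Pi.smul_apply, smul_eq_mul]
    erw [h2] at this
    exact Uu_pow_ne_zero k this.symm
/-- Lemma A: a cycle in `symCplx M` with vanishing `T₀`-coordinate is `U`-torsion. -/
lemma torsion_of_comp_zero (M : List ℤ) (hM : StdParams M) (z : V (M.length + 1))
    (hz : (symCplx M).d z = 0) (hz0 : z ⟨0, Nat.succ_pos _⟩ = 0) :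
    ∃ k y, (symCplx M).d y = (Uu ^ k) • z := by
  obtain ⟨hlen, hpar⟩ := hM
  have hcyc : ∀ j : Fin (M.length + 1), ∑ i : Fin (M.length + 1), z i * dCoef M i j = 0 := by
    intro j
    have := congrFun hz j
    erw [symCplx_d_apply] at this
    exact this
  have Z1 : ∀ j : Fin (M.length + 1), (j : ℕ) % 2 = 1 → seqAt M j < 0 → z j = 0 := by
    intro j hodd hneg
    have hjn : (j : ℕ) < M.length + 1 := j.isLt
    have hjlt : (j : ℕ) < M.length := by omega
    have hc := hcyc ⟨(j : ℕ) + 1, by omega⟩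
    rw [sum_single z _ j (fun i hi => ?_)] at hc
    · have hd : dCoef M j ((j : ℕ) + 1) = Uu ^ (seqAt M j).natAbs := by
        rw [dCoef, if_pos ⟨hodd, hneg, rfl⟩]
      rw [hd] at hc
      exact (mul_eq_zero.mp hc).resolve_right (Uu_pow_ne_zero _)
    · show dCoef M i ((j : ℕ) + 1) = 0
      have hne : (i : ℕ) ≠ (j : ℕ) := fun h => hi (Fin.ext h)
      rw [dCoef, if_neg (by rintro ⟨h1, -, h3⟩; omega),
        if_neg (by rintro ⟨h1, -, -, h4⟩; omega)]
  have Z2 : ∀ j : Fin (M.length + 1), (j : ℕ) % 2 = 0 → 0 < (j : ℕ) →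
      0 < seqAt M ((j : ℕ) - 1) → z j = 0 := by
    intro j heven hpos hb
    have hjn : (j : ℕ) < M.length + 1 := j.isLt
    have hc := hcyc ⟨(j : ℕ) - 1, by omega⟩
    rw [sum_single z _ j (fun i hi => ?_)] at hc
    · have hd : dCoef M j ((j : ℕ) - 1) = Uu ^ (seqAt M ((j : ℕ) - 1)).natAbs := by
        rw [dCoef, if_neg (by rintro ⟨h1, -, -⟩; omega),
          if_pos ⟨heven, hpos, hb, by omega⟩]
      rw [hd] at hc
      exact (mul_eq_zero.mp hc).resolve_right (Uu_pow_ne_zero _)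
    · show dCoef M i ((j : ℕ) - 1) = 0
      have hne : (i : ℕ) ≠ (j : ℕ) := fun h => hi (Fin.ext h)
      rw [dCoef, if_neg (by rintro ⟨h1, -, h3⟩; omega),
        if_neg (by rintro ⟨h1, -, -, h4⟩; omega)]
  set N := ∑ s ∈ Finset.range M.length, (seqAt M s).natAbs with hNdef
  have hN : ∀ s, s < M.length → (seqAt M s).natAbs ≤ N := by
    intro s hs
    rw [hNdef]
    exact Finset.single_le_sum (f := fun s => (seqAt M s).natAbs)
      (fun _ _ => Nat.zero_le _) (Finset.mem_range.mpr hs)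
  set y : V (M.length + 1) := fun j =>
    if h1 : (j : ℕ) % 2 = 1 ∧ seqAt M j < 0 then
      Uu ^ (N - (seqAt M j).natAbs) * z ⟨(j : ℕ) + 1, by
        have := j.isLt; omega⟩
    else if h2 : (j : ℕ) % 2 = 0 ∧ 0 < (j : ℕ) ∧ 0 < seqAt M ((j : ℕ) - 1) then
      Uu ^ (N - (seqAt M ((j : ℕ) - 1)).natAbs) * z ⟨(j : ℕ) - 1, by omega⟩
    else 0 with hydef
  refine ⟨N, y, ?_⟩
  funext j
  have hjn : (j : ℕ) < M.length + 1 := j.isLt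
  erw [symCplx_d_apply]
  have hRHS : ((Uu ^ N) • z) j = Uu ^ N * z j := rfl
  rw [hRHS]
  by_cases hj0 : (j : ℕ) = 0
  · have hzj : z j = 0 := by
      rw [show j = (⟨0, Nat.succ_pos _⟩ : Fin (M.length + 1)) from Fin.ext hj0]
      exact hz0
    rw [sum_zero _ _ (fun i => by
      show dCoef M i (j : ℕ) = 0
      rw [show ((j : ℕ)) = 0 from hj0]
      exact dCoef_col_zero M i), hzj, mul_zero]
  by_cases hjodd : (j : ℕ) % 2 = 1
  -- odd target
  · have hjlt : (j : ℕ) < M.length := by omega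
    by_cases hb : 0 < seqAt M (j : ℕ)
    · -- b > 0 : unique contributor j+1
      have hi0lt : (j : ℕ) + 1 < M.length + 1 := by omega
      rw [sum_single _ _ ⟨(j : ℕ) + 1, hi0lt⟩ (fun i hi => ?_)]
      · have hd : dCoef M ((j : ℕ) + 1) (j : ℕ) = Uu ^ (seqAt M j).natAbs := by
          rw [dCoef, if_neg (by rintro ⟨h1, -, -⟩; omega),
            if_pos ⟨by omega, by omega, by simpa using hb, by omega⟩]
          simp
        have hy : y ⟨(j : ℕ) + 1, hi0lt⟩ = Uu ^ (N - (seqAt M j).natAbs) * z j := by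
          rw [hydef]
          simp only [Fin.val_mk]
          rw [dif_neg (by rintro ⟨h1, -⟩; omega),
            dif_pos ⟨by simpa using (by omega : ((j : ℕ) + 1) % 2 = 0), by omega,
              by simpa using hb⟩]
          simp; exact Or.inl rfl
        rw [hy, hd, mul_right_comm, ← pow_add, Nat.sub_add_cancel (hN _ hjlt)]
      · show dCoef M i (j : ℕ) = 0
        have hne : (i : ℕ) ≠ (j : ℕ) + 1 := fun h => hi (Fin.ext h)
        rw [dCoef, if_neg (by rintro ⟨h1, -, h3⟩; omega),
          if_neg (by rintro ⟨h1, -, -, h4⟩; omega)]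
    · -- b < 0 : no contributors, z j = 0
      have hbne : seqAt M (j : ℕ) ≠ 0 := by
        have := hpar (j : ℕ) hjlt
        rw [if_neg (by omega)] at this
        exact this
      have hbneg : seqAt M (j : ℕ) < 0 := by omega
      rw [sum_zero _ _ (fun i => ?_), Z1 j hjodd hbneg, mul_zero]
      show dCoef M i (j : ℕ) = 0
      rw [dCoef, if_neg (by rintro ⟨h1, -, h3⟩; omega),
        if_neg (by
          rintro ⟨h1, -, h3, h4⟩
          have hh : ((i : ℕ)) - 1 = (j : ℕ) := by omega
          rw [hh] at h3
          omega)]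
  -- even target, positive
  · have hjeven : (j : ℕ) % 2 = 0 := by omega
    have hjpos : 0 < (j : ℕ) := by omega
    have hj1lt : (j : ℕ) - 1 < M.length := by omega
    by_cases hb : seqAt M ((j : ℕ) - 1) < 0
    · -- b < 0 : unique contributor j-1
      rw [sum_single _ _ ⟨(j : ℕ) - 1, by omega⟩ (fun i hi => ?_)]
      · have hd : dCoef M ((j : ℕ) - 1) (j : ℕ) = Uu ^ (seqAt M ((j : ℕ) - 1)).natAbs := by
          rw [dCoef, if_pos ⟨by omega, hb, by omega⟩]
        have hy : y ⟨(j : ℕ) - 1, by omega⟩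
            = Uu ^ (N - (seqAt M ((j : ℕ) - 1)).natAbs) * z j := by
          rw [hydef]
          simp only [Fin.val_mk]
          rw [dif_pos ⟨by omega, by simpa using hb⟩]
          congr 1
          exact congrArg z (Fin.ext (by simp only [Fin.val_mk]; omega))
        rw [hy, hd, mul_right_comm, ← pow_add, Nat.sub_add_cancel (hN _ hj1lt)]
      · show dCoef M i (j : ℕ) = 0
        have hne : (i : ℕ) ≠ (j : ℕ) - 1 := fun h => hi (Fin.ext h)
        rw [dCoef, if_neg (by rintro ⟨h1, -, h3⟩; omega),
          if_neg (by rintro ⟨h1, -, -, h4⟩; omega)]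
    · -- b > 0 : no contributors, z j = 0
      have hbne : seqAt M ((j : ℕ) - 1) ≠ 0 := by
        have := hpar ((j : ℕ) - 1) hj1lt
        rw [if_neg (by omega)] at this
        exact this
      have hbpos : 0 < seqAt M ((j : ℕ) - 1) := by omega
      rw [sum_zero _ _ (fun i => ?_), Z2 j hjeven hjpos hbpos, mul_zero]
      show dCoef M i (j : ℕ) = 0
      rw [dCoef, if_neg (by
          rintro ⟨h1, h2, h3⟩
          have hh : ((i : ℕ)) = (j : ℕ) - 1 := by omega
          rw [hh] at h2
          omega),
        if_neg (by rintro ⟨h1, -, -, h4⟩; omega)]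
lemma seqAt_zero_of_short (M : List ℤ) (k : ℕ) (h : M.length ≤ k) : seqAt M k = 0 :=
  List.getD_eq_default _ _ h

lemma d_comp_two (M : List ℤ) (hb : seqAt M 1 < 0) (h2 : 2 < M.length + 1)
    (h1 : 1 < M.length + 1) (w : V (M.length + 1)) :
    (symCplx M).d w ⟨2, h2⟩ = w ⟨1, h1⟩ * Uu ^ (seqAt M 1).natAbs := by
  erw [symCplx_d_apply, sum_single _ _ ⟨1, h1⟩ (fun i hi => ?_)]
  · congr 1
    show dCoef M 1 2 = Uu ^ (seqAt M 1).natAbs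
    rw [dCoef, if_pos ⟨by norm_num, hb, by norm_num⟩]
  · show dCoef M i (2 : ℕ) = 0
    have hne : (i : ℕ) ≠ 1 := fun h => hi (Fin.ext h)
    rw [dCoef, if_neg (by rintro ⟨-, -, q⟩; omega),
      if_neg (by rintro ⟨p, -, -, q⟩; omega)]

lemma d_comp_one_zero (M : List ℤ) (hb : ¬ 0 < seqAt M 1) (h1 : 1 < M.length + 1)
    (w : V (M.length + 1)) : (symCplx M).d w ⟨1, h1⟩ = 0 := by
  erw [symCplx_d_apply]
  refine sum_zero _ _ (fun i => ?_)
  show dCoef M i (1 : ℕ) = 0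
  rw [dCoef, if_neg (by rintro ⟨p, -, q⟩; omega),
    if_neg (by
      rintro ⟨p, -, r, q⟩
      have hh : ((i : ℕ)) - 1 = 1 := by omega
      rw [hh] at r
      exact hb r)]

lemma iota_comp_one (M : List ℤ) (h0 : seqAt M 0 = -1) (hn : 1 < M.length + 1)
    (w : V (M.length + 1)) :
    (symCplx M).ι w ⟨1, hn⟩ = w ⟨1, hn⟩ + w ⟨0, Nat.succ_pos _⟩ := by
  erw [symCplx_i_apply]
  have hco : ∀ i : Fin (M.length + 1), iCoef M i (1 : ℕ)
      = (if i = (⟨1, hn⟩ : Fin (M.length + 1)) then 1 else 0)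
        + (if i = (⟨0, Nat.succ_pos _⟩ : Fin (M.length + 1)) then 1 else 0) := by
    intro i
    have hw : wCoef M i (1 : ℕ)
        = (if i = (⟨0, Nat.succ_pos _⟩ : Fin (M.length + 1)) then 1 else 0) := by
      by_cases hi0 : (i : ℕ) = 0
      · rw [wCoef, if_pos ⟨by omega, by rw [hi0]; exact h0, by omega⟩,
          if_pos (Fin.ext hi0)]
      · rw [wCoef, if_neg (by rintro ⟨-, -, q⟩; omega),
          if_neg (by rintro ⟨p, -, q⟩; omega), if_neg (fun h => hi0 (by
            have := congrArg Fin.val h; simpa using this))]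
    rw [iCoef, hw]
    congr 1
    by_cases hi1 : (i : ℕ) = 1
    · rw [if_pos hi1, if_pos (Fin.ext hi1)]
    · rw [if_neg hi1, if_neg (fun h => hi1 (by
        have := congrArg Fin.val h; simpa using this))]
  simp only [hco, mul_add, Finset.sum_add_distrib, mul_ite, mul_one, mul_zero,
    Finset.sum_ite_eq', Finset.mem_univ, if_true]

/-- Case 1: no local map from a genuine ι-complex to `symCplx M` with `(a₁,b₂)=(-1,-i)`. -/
lemma case_one (M : List ℤ) (hM : StdParams M) (h0 : seqAt M 0 = -1) (h1 : seqAt M 1 < 0)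
    (X : PreAI) (hX : IsIotaCplx X) (f : V X.n →ₗ[R] V (symCplx M).n)
    (hf : isLocalMap X (symCplx M) f) : False := by
  obtain ⟨⟨hXdgr, hXdd⟩, hXigr, hXcomm, -, hXtower⟩ := hX
  obtain ⟨x, hxcyc, hxhom, hxnt, -⟩ := hXtower
  obtain ⟨⟨hfgr, hfchain, H, hHgr, hH⟩, hfloc⟩ := hf
  have hlen2 : 2 ≤ M.length := by
    by_contra h
    rw [seqAt_zero_of_short M 1 (by omega)] at h1
    omega
  have h1n : 1 < M.length + 1 := by omega
  have h2n : 2 < M.length + 1 := by omega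
  set z : V (M.length + 1) := f x with hzdef
  have hfd : ∀ w, f (X.d w) = (symCplx M).d (f w) := fun w => by
    simpa using LinearMap.congr_fun hfchain w
  have hzcyc : (symCplx M).d z = 0 := by
    rw [hzdef, ← hfd, hxcyc, map_zero]
  have hznt : ∀ k, ¬ IsBdry (symCplx M).toPreCplx ((Uu ^ k) • z) :=
    (hfloc x ⟨hxcyc, hxnt⟩).2
  have hzhom : IsHomog (symCplx M).gr 0 z := by
    have := homog_map hfgr hxhom
    simpa using this
  -- the T₀-coefficient of z is a unit
  have hz0 : (z ⟨0, Nat.succ_pos _⟩).coeff 0 ≠ 0 := by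
    intro hc
    have hz00 : z ⟨0, Nat.succ_pos _⟩ = 0 := by
      ext m
      rcases Nat.eq_zero_or_pos m with rfl | hm
      · simpa using hc
      · by_contra hcm
        have := hzhom ⟨0, Nat.succ_pos _⟩ m (by intro h; apply hcm; exact h.trans (Polynomial.coeff_zero m).symm)
        erw [symCplx_gr, stdGr_zero] at this
        omega
    obtain ⟨k, y, hy⟩ := torsion_of_comp_zero M hM z hzcyc hz00
    exact hznt k ⟨y, hy⟩
  -- ω x is a cycle in X
  have hwxcyc : X.d ((omega X) x) = 0 := by
    have hcomm : ∀ w, X.ι (X.d w) = X.d (X.ι w) := fun w => by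
      simpa using LinearMap.congr_fun hXcomm w
    have : (omega X) x = x + X.ι x := rfl
    rw [this, map_add, hxcyc, ← hcomm, hxcyc, map_zero, add_zero]
  -- (f (ω x)) at T₁ vanishes
  have hfw1 : f ((omega X) x) ⟨1, h1n⟩ = 0 := by
    have hcyc2 : (symCplx M).d (f ((omega X) x)) = 0 := by
      rw [← hfd, hwxcyc, map_zero]
    have := congrFun hcyc2 ⟨2, h2n⟩
    erw [d_comp_two M h1 h2n h1n] at this
    have h0' : f ((omega X) x) ⟨1, h1n⟩ * Uu ^ (seqAt M 1).natAbs = 0 := by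
      exact this
    exact (mul_eq_zero.mp h0').resolve_right (Uu_pow_ne_zero _)
  -- unpack the homotopy at x
  have hu : modU ((f ∘ₗ X.ι + (symCplx M).ι ∘ₗ f + H ∘ₗ X.d + (symCplx M).d ∘ₗ H) x) :=
    hH x
  have hu1 := hu ⟨1, h1n⟩
  have hdx : X.d x = 0 := hxcyc
  have hexp : ((f ∘ₗ X.ι + (symCplx M).ι ∘ₗ f + H ∘ₗ X.d + (symCplx M).d ∘ₗ H) x) ⟨1, h1n⟩
      = f (X.ι x) ⟨1, h1n⟩ + ((symCplx M).ι z) ⟨1, h1n⟩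
        + ((symCplx M).d (H x)) ⟨1, h1n⟩ := by
    simp only [LinearMap.add_apply, LinearMap.comp_apply, Pi.add_apply, hdx, map_zero,
      hzdef, Pi.zero_apply, add_zero]
  rw [hexp] at hu1
  erw [iota_comp_one M h0 h1n, d_comp_one_zero M (by omega) h1n] at hu1
  have homega : f ((omega X) x) ⟨1, h1n⟩ = z ⟨1, h1n⟩ + f (X.ι x) ⟨1, h1n⟩ := by
    have hfo : f ((omega X) x) = f x + f (X.ι x) := by
      show f (x + X.ι x) = _
      rw [map_add]
    rw [hfo]
    rfl
  have hfi1 : f (X.ι x) ⟨1, h1n⟩ = z ⟨1, h1n⟩ := by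
    rw [homega] at hfw1
    exact (eqR_of_add hfw1).symm
  rw [hfi1] at hu1
  simp only [Polynomial.coeff_add, Polynomial.coeff_zero] at hu1
  have hadd : ∀ a : F2, a + a = 0 := by decide
  rw [add_zero, ← add_assoc, hadd, zero_add] at hu1
  exact hz0 hu1
lemma zsmul_two_zero {n : ℕ} (w : V n) : (2 : ℤ) • w = 0 := by
  rw [two_smul]; exact v_add_self w

lemma nsmul_two_zero {n : ℕ} (w : V n) : (2 : ℕ) • w = 0 := by
  rw [two_smul]; exact v_add_self w

/-- Case 2: no genuine ι-complex maps to/from `symCplx M` with `(a₁,b₂)=(1,i)` locally. -/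
lemma case_two (M : List ℤ) (hM : StdParams M) (h0 : seqAt M 0 = 1) (h1 : 0 < seqAt M 1)
    (X : PreAI) (hX : IsIotaCplx X)
    (g : V (symCplx M).n →ₗ[R] V X.n) (hg : isLocalMap (symCplx M) X g)
    (f : V X.n →ₗ[R] V (symCplx M).n) (hf : isLocalMap X (symCplx M) f) : False := by
  obtain ⟨⟨hXdgr, hXdd⟩, hXigr, hXcomm, -, -⟩ := hX
  obtain ⟨⟨hggr, hgchain, K, hKgr, hK⟩, hgloc⟩ := hg
  obtain ⟨⟨hfgr, hfchain, -⟩, hfloc⟩ := hf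
  have hlen2 : 2 ≤ M.length := by
    by_contra h
    rw [seqAt_zero_of_short M 1 (by omega)] at h1
    omega
  have h1n : 1 < (symCplx M).n := by show 1 < M.length + 1; omega
  have h2n : 2 < (symCplx M).n := by show 2 < M.length + 1; omega
  set a := (seqAt M 1).natAbs with hadef
  have hgd : ∀ w, g ((symCplx M).d w) = X.d (g w) := fun w => by
    simpa using LinearMap.congr_fun hgchain w
  have hfd : ∀ w, f (X.d w) = (symCplx M).d (f w) := fun w => by
    simpa using LinearMap.congr_fun hfchain w
  have hXid : ∀ w, X.ι (X.d w) = X.d (X.ι w) := fun w => by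
    simpa using LinearMap.congr_fun hXcomm w
  have hXdd' : ∀ w, X.d (X.d w) = 0 := fun w => by
    simpa using LinearMap.congr_fun hXdd w
  have hde0 : (symCplx M).d (e ⟨0, Nat.succ_pos _⟩) = 0 :=
    (e0_nontorsion M (Nat.succ_pos _)).1
  have hde1 : (symCplx M).d (e ⟨1, h1n⟩) = 0 := by
    funext j
    erw [d_on_basis]
    show dCoef M 1 (j : ℕ) = 0
    rw [dCoef, if_neg (by rintro ⟨-, q, -⟩; omega),
      if_neg (by rintro ⟨p, -, -, -⟩; omega)]
  have hde2 : (symCplx M).d (e ⟨2, h2n⟩) = (Uu ^ a) • e ⟨1, h1n⟩ := by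
    funext j
    erw [d_on_basis]
    show dCoef M 2 (j : ℕ) = ((Uu ^ a) • e ⟨1, h1n⟩) j
    by_cases hj : (j : ℕ) = 1
    · rw [dCoef, if_neg (by rintro ⟨p, -, -⟩; omega),
        if_pos ⟨by norm_num, by norm_num, by simpa using h1, by omega⟩]
      have hj' : j = ⟨1, h1n⟩ := Fin.ext hj
      rw [hj']
      simp [e, Pi.smul_apply, smul_eq_mul, hadef]
    · rw [dCoef, if_neg (by rintro ⟨p, -, -⟩; omega),
        if_neg (by rintro ⟨-, -, -, q⟩; omega)]
      have hj' : j ≠ ⟨1, h1n⟩ := fun h => hj (by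
        have := congrArg Fin.val h; simpa using this)
      simp [e, Pi.smul_apply, smul_eq_mul, hj']
  have hie1 : (symCplx M).ι (e ⟨1, h1n⟩) = e ⟨1, h1n⟩ + e ⟨0, Nat.zero_lt_of_lt h1n⟩ := by
    funext j
    erw [i_on_basis]
    show iCoef M 1 (j : ℕ) = ((e ⟨1, h1n⟩ + e ⟨0, Nat.zero_lt_of_lt h1n⟩ : V (symCplx M).n)) j
    rw [iCoef, wCoef]
    by_cases hj0 : (j : ℕ) = 0
    · rw [if_neg (by omega), if_neg (by rintro ⟨p, -, -⟩; omega),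
        if_pos ⟨by norm_num, by simpa using h0, by omega⟩]
      have hj' : j = ⟨0, Nat.succ_pos _⟩ := Fin.ext hj0
      simp [hj', e, Pi.add_apply, Fin.ext_iff]
    · by_cases hj1 : (j : ℕ) = 1
      · rw [if_pos (by omega), if_neg (by rintro ⟨p, -, -⟩; omega),
          if_neg (by rintro ⟨-, -, q⟩; omega)]
        have hj' : j = ⟨1, h1n⟩ := Fin.ext hj1
        simp [hj', e, Pi.add_apply, Fin.ext_iff]
      · rw [if_neg (by omega), if_neg (by rintro ⟨p, -, -⟩; omega),
          if_neg (by rintro ⟨-, -, q⟩; omega)]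
        simp [e, Pi.add_apply, Fin.ext_iff, hj0, hj1]
  have hycyc : X.d (g (e ⟨1, h1n⟩)) = 0 := by rw [← hgd, hde1, map_zero]
  have htors : X.d (g (e ⟨2, h2n⟩)) = (Uu ^ a) • g (e ⟨1, h1n⟩) := by
    erw [← hgd, hde2, map_smul]
  have hu0 : modU ((g ∘ₗ (symCplx M).ι + X.ι ∘ₗ g + K ∘ₗ (symCplx M).d + X.d ∘ₗ K)
      (e ⟨1, h1n⟩)) := hK _
  set u : V X.n := ((g ∘ₗ (symCplx M).ι + X.ι ∘ₗ g + K ∘ₗ (symCplx M).d + X.d ∘ₗ K)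
      (e ⟨1, h1n⟩)) with hudef
  have huexp : u = (omega X) (g (e ⟨1, h1n⟩)) + g (e ⟨0, Nat.succ_pos _⟩)
      + X.d (K (e ⟨1, h1n⟩)) := by
    rw [hudef]
    simp only [LinearMap.add_apply, LinearMap.comp_apply, hde1, map_zero, hie1, map_add,
      add_zero]
    have hom : (omega X) (g (e ⟨1, h1n⟩)) = g (e ⟨1, h1n⟩) + X.ι (g (e ⟨1, h1n⟩)) := rfl
    rw [hom]
    abel
  have hωd : ∀ w, (omega X) (X.d w) = X.d ((omega X) w) := fun w => by
    show X.d w + X.ι (X.d w) = X.d (w + X.ι w)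
    rw [map_add, hXid]
  have hω : (omega X) (g (e ⟨1, h1n⟩)) = u + g (e ⟨0, Nat.succ_pos _⟩)
      + X.d (K (e ⟨1, h1n⟩)) := by
    rw [huexp]
    abel_nf
    simp only [zsmul_two_zero, nsmul_two_zero, add_zero, zero_add]
  have hkey : X.d ((omega X) (g (e ⟨2, h2n⟩)) + (Uu ^ a) • K (e ⟨1, h1n⟩))
      = (Uu ^ a) • g (e ⟨0, Nat.succ_pos _⟩) + (Uu ^ a) • u := by
    rw [map_add, map_smul, ← hωd, htors, map_smul, hω, smul_add, smul_add]
    abel_nf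
    simp only [zsmul_two_zero, nsmul_two_zero, add_zero, zero_add]
  obtain ⟨v, hv⟩ := modU_exists hu0
  have hdu : X.d u = 0 := by
    rw [huexp, map_add, map_add, hXdd', ← hωd, hycyc, map_zero, ← hgd, hde0, map_zero]
    simp
  have hdv : X.d v = 0 := by
    have hsm : Uu • X.d v = 0 := by rw [← map_smul, ← hv, hdu]
    funext j
    have hj := congrFun hsm j
    have : Uu * (X.d v) j = 0 := by simpa [Pi.smul_apply, smul_eq_mul] using hj
    have := (mul_eq_zero.mp this).resolve_left (by exact Uu_ne_zero)
    simpa using this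
  have hgT0nt : NontorsionClass X.toPreCplx (g (e ⟨0, Nat.succ_pos _⟩)) :=
    hgloc _ (e0_nontorsion M (Nat.succ_pos _))
  have hvnt : ∀ k, ¬ IsBdry X.toPreCplx ((Uu ^ k) • v) := by
    rintro k ⟨zz, hzz⟩
    apply hgT0nt.2 (a + k)
    refine ⟨(Uu ^ k) • ((omega X) (g (e ⟨2, h2n⟩)) + (Uu ^ a) • K (e ⟨1, h1n⟩))
      + (Uu ^ (a + 1)) • zz, ?_⟩
    have s1 : (Uu ^ k) • ((Uu ^ a) • g (e ⟨0, Nat.succ_pos _⟩))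
        = (Uu ^ (a + k)) • g (e ⟨0, Nat.succ_pos _⟩) := by
      rw [smul_smul]
      congr 1
      rw [← pow_add, Nat.add_comm]
    have s2 : (Uu ^ k) • ((Uu ^ a) • u) = (Uu ^ (a + k + 1)) • v := by
      rw [hv, smul_smul, smul_smul]
      congr 1
      ring
    have s3 : (Uu ^ (a + 1)) • ((Uu ^ k) • v) = (Uu ^ (a + k + 1)) • v := by
      rw [smul_smul]
      congr 1
      ring
    rw [map_add, map_smul, map_smul, hkey, hzz, smul_add, s1, s2, s3, add_assoc,
      v_add_self, add_zero]
  -- homogeneity of v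
  have hge1hom : IsHomog X.gr 0 (g (e ⟨1, h1n⟩)) := by
    have := hggr ⟨1, h1n⟩
    simpa [symCplx, stdGr_one] using this
  have hge0hom : IsHomog X.gr 0 (g (e ⟨0, Nat.succ_pos _⟩)) := by
    have := hggr ⟨0, Nat.succ_pos _⟩
    simpa [symCplx, stdGr_zero] using this
  have hiyhom : IsHomog X.gr 0 (X.ι (g (e ⟨1, h1n⟩))) := by
    simpa using homog_map hXigr hge1hom
  have hKe1hom : IsHomog X.gr 1 (K (e ⟨1, h1n⟩)) := by
    have := hKgr ⟨1, h1n⟩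
    simpa [symCplx, stdGr_one] using this
  have hdKhom : IsHomog X.gr 0 (X.d (K (e ⟨1, h1n⟩))) := by
    have := homog_map hXdgr hKe1hom
    simpa using this
  have huhom : IsHomog X.gr 0 u := by
    rw [huexp]
    exact homog_add (homog_add
      (show IsHomog X.gr 0 ((omega X) (g (e ⟨1, h1n⟩))) from
        homog_add hge1hom hiyhom) hge0hom) hdKhom
  have hvhom : IsHomog X.gr 2 v := by
    have := homog_of_Usmul (show IsHomog X.gr 0 (Uu • v) from hv ▸ huhom)
    simpa using this
  -- map to the standard complex and contradict Lemma A
  have hfvcyc : (symCplx M).d (f v) = 0 := by rw [← hfd, hdv, map_zero]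
  have hfvnt := hfloc v ⟨hdv, hvnt⟩
  have hfvhom : IsHomog (symCplx M).gr 2 (f v) := by
    simpa using homog_map hfgr hvhom
  have hfv0 : f v ⟨0, Nat.succ_pos _⟩ = 0 := by
    ext m
    by_contra hcm
    have := hfvhom ⟨0, Nat.succ_pos _⟩ m (by simpa using hcm)
    erw [symCplx_gr, stdGr_zero] at this
    omega
  obtain ⟨k, w, hw⟩ := torsion_of_comp_zero M hM (f v) hfvcyc hfv0
  exact hfvnt.2 k ⟨w, hw⟩

/-- non-realizability: if the standard complex of `A` has initial
parameters `(−1, −i)` with `i > 0` (or dually `(+1, i)`), then `A` is not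
locally equivalent to any genuine ι-complex; in particular the forgetful map
from ι-complexes to almost ι-complexes modulo local equivalence is not
surjective. -/
theorem non_realizable (A : PreAI) (hA : IsAICplx A) (M : List ℤ) (hM : StdParams M)
    (hfirst : (seqAt M 0 = -1 ∧ seqAt M 1 < 0) ∨ (seqAt M 0 = 1 ∧ 0 < seqAt M 1))
    (heq : LocallyEquiv A (symCplx M)) :
    (¬ ∃ X : PreAI, IsIotaCplx X ∧ LocallyEquiv X A) ∧
    ∃ A' : PreAI, IsAICplx A' ∧ ¬ ∃ X : PreAI, IsIotaCplx X ∧ LocallyEquiv X A' := by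
  have main : ¬ ∃ X : PreAI, IsIotaCplx X ∧ LocallyEquiv X A := by
    rintro ⟨X, hX, ⟨⟨f0, hf0⟩, ⟨g0, hg0⟩⟩⟩
    obtain ⟨⟨fA, hfA⟩, ⟨gA, hgA⟩⟩ := heq
    rcases hfirst with ⟨ha, hb⟩ | ⟨ha, hb⟩
    · exact case_one M hM ha hb X hX (fA ∘ₗ f0) (isLocalMap_comp hf0 hfA)
    · exact case_two M hM ha hb X hX (g0 ∘ₗ gA) (isLocalMap_comp hgA hg0)
        (fA ∘ₗ f0) (isLocalMap_comp hf0 hfA)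
  exact ⟨main, A, hA, main⟩

end AI
end
end
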